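/- Let S = {(0,0,1), (1,1,0)} ⊆ ℤ³, B = {(0,0,0), (1,0,0)}, and define f : ℤ³ → ℝ ∪ {+∞} by f(x) = 0 for x ∈ S, f(x) = 1 for x in the box [(0,0,0), (1,1,1)] ∩ ℤ³ but not in S, and f(x) = +∞ otherwise; let φ = δ_B be the indicator function of B (0 on B, +∞ off B), which is separable convex. Then the convolution g = f □ φ satisfies: for x = (0,0,1) and y = (2,1,0), ‖x − y‖∞ = 2, g(x) = g(y) = 0, and g(⌈(x+y)/2⌉) = g(⌊(x+y)/2⌋) = 1; hence g(x) + g(y) < g(⌈(x+y)/2⌉) + g(⌊(x+y)/2⌋), so g is neither globally nor locally discrete midpoint convex. -/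

import Mathlib

open scoped BigOperators

noncomputable section

variable {ι : Type*} [Fintype ι]

/-- Embedding of integer vectors into real vectors. -/
def embedZ (z : ι → ℤ) : ι → ℝ := fun i => (z i : ℝ)

/-- The integral neighborhood `N(x)` of a real vector `x`. -/
def IntNbhd (x : ι → ℝ) : Set (ι → ℤ) := {z | ∀ i, |x i - (z i : ℝ)| < 1}

/-- A set `S ⊆ ℤ^ι` is integrally convex if every point `x` of its convex hull
belongs to the convex hull of `S ∩ N(x)`. -/
def IntegrallyConvexSet (S : Set (ι → ℤ)) : Prop :=
  ∀ x ∈ convexHull ℝ (embedZ '' S), x ∈ convexHull ℝ (embedZ '' (S ∩ IntNbhd x))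

/-- The local convex extension `f̃` of `f : ℤ^ι → ℝ ∪ {+∞}`. -/
def LocalConvexExt (f : (ι → ℤ) → EReal) (x : ι → ℝ) : EReal :=
  sInf {v : EReal | ∃ (A : Finset (ι → ℤ)) (lam : (ι → ℤ) → ℝ),
    (∀ z ∈ A, z ∈ IntNbhd x) ∧ (∀ z ∈ A, 0 ≤ lam z) ∧
    (∑ z ∈ A, lam z) = 1 ∧ (∀ i, (∑ z ∈ A, lam z * (z i : ℝ)) = x i) ∧
    v = ∑ z ∈ A, ((lam z : EReal) * f z)}

/-- A function `f : ℤ^ι → ℝ ∪ {+∞}` is integrally convex if its local convex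
extension is a convex function on `ℝ^ι`. -/
def IntegrallyConvexFn (f : (ι → ℤ) → EReal) : Prop :=
  ∀ x y : ι → ℝ, ∀ a b : ℝ, 0 ≤ a → 0 ≤ b → a + b = 1 →
    LocalConvexExt f (a • x + b • y) ≤
      (a : EReal) * LocalConvexExt f x + (b : EReal) * LocalConvexExt f y

/-- Componentwise rounded-up midpoint `⌈(x+y)/2⌉` of two integer vectors. -/
def midUp (x y : ι → ℤ) : ι → ℤ := fun i => ⌈((x i + y i : ℤ) : ℚ) / 2⌉

/-- Componentwise rounded-down midpoint `⌊(x+y)/2⌋` of two integer vectors. -/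
def midDown (x y : ι → ℤ) : ι → ℤ := fun i => ⌊((x i + y i : ℤ) : ℚ) / 2⌋

/-- A set `S ⊆ ℤ^ι` is discrete midpoint convex if for all `x, y ∈ S` with
`‖x - y‖∞ ≥ 2`, both `⌈(x+y)/2⌉` and `⌊(x+y)/2⌋` belong to `S`. -/
def DiscreteMidpointConvexSet (S : Set (ι → ℤ)) : Prop :=
  ∀ x ∈ S, ∀ y ∈ S, (∃ i, 2 ≤ |x i - y i|) → midUp x y ∈ S ∧ midDown x y ∈ S

/-- Globally discrete midpoint convex function: discrete midpoint convexity for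
all pairs with `‖x - y‖∞ ≥ 2`. -/
def GloballyDMC (f : (ι → ℤ) → EReal) : Prop :=
  ∀ x y : ι → ℤ, (∃ i, 2 ≤ |x i - y i|) →
    f (midUp x y) + f (midDown x y) ≤ f x + f y

/-- Locally discrete midpoint convex function: effective domain is a discrete
midpoint convex set, and discrete midpoint convexity holds whenever `‖x - y‖∞ = 2`. -/
def LocallyDMC (f : (ι → ℤ) → EReal) : Prop :=
  DiscreteMidpointConvexSet {x | f x ≠ ⊤} ∧
  ∀ x y : ι → ℤ, (∀ i, |x i - y i| ≤ 2) → (∃ i, |x i - y i| = 2) →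
    f (midUp x y) + f (midDown x y) ≤ f x + f y

/-- An integer interval (box) `B = [a, b] ∩ ℤ^ι` with bounds
`a ∈ (ℤ ∪ {-∞})^ι`, `b ∈ (ℤ ∪ {+∞})^ι`, `a ≤ b`. -/
def IsIntegerInterval (B : Set (ι → ℤ)) : Prop :=
  ∃ a b : ι → EReal,
    (∀ i, a i = ⊥ ∨ ∃ k : ℤ, a i = ((k : ℝ) : EReal)) ∧
    (∀ i, b i = ⊤ ∨ ∃ k : ℤ, b i = ((k : ℝ) : EReal)) ∧
    (∀ i, a i ≤ b i) ∧
    B = {x | ∀ i, a i ≤ ((x i : ℝ) : EReal) ∧ ((x i : ℝ) : EReal) ≤ b i}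

/-- Separable convex function: a sum of univariate discrete convex functions. -/
def SeparableConvex (φ : (ι → ℤ) → EReal) : Prop :=
  ∃ φi : ι → ℤ → EReal,
    (∀ i t, φi i t ≠ ⊥) ∧
    (∀ i t, 2 * φi i t ≤ φi i (t - 1) + φi i (t + 1)) ∧
    (∀ x, φ x = ∑ i, φi i (x i))

private theorem sepaux (φ : (Fin 3 → ℤ) → EReal)
    (hφB : ∀ x ∈ ({![0,0,0], ![1,0,0]} : Set (Fin 3 → ℤ)), φ x = 0)
    (hφout : ∀ x : Fin 3 → ℤ, x ∉ ({![0,0,0], ![1,0,0]} : Set (Fin 3 → ℤ)) → φ x = ⊤) :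
    SeparableConvex φ := by
  classical
  refine ⟨fun i t => if t = 0 ∨ (i = 0 ∧ t = 1) then (0:EReal) else ⊤, ?_, ?_, ?_⟩
  · intro i t
    dsimp only
    split
    · exact EReal.zero_ne_bot
    · exact top_ne_bot
  · intro i t
    have h1 : ¬ ((t - 1 = 0 ∨ (i = 0 ∧ t - 1 = 1)) ∧ (t + 1 = 0 ∨ (i = 0 ∧ t + 1 = 1))) := by
      rintro ⟨h | h, h' | h'⟩ <;> omega
    have h2 : (if t - 1 = 0 ∨ (i = 0 ∧ t - 1 = 1) then (0:EReal) else ⊤) +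
        (if t + 1 = 0 ∨ (i = 0 ∧ t + 1 = 1) then (0:EReal) else ⊤) = ⊤ := by
      by_cases ha : t - 1 = 0 ∨ (i = 0 ∧ t - 1 = 1) <;>
        by_cases hb : t + 1 = 0 ∨ (i = 0 ∧ t + 1 = 1)
      · exact absurd ⟨ha, hb⟩ h1
      · rw [if_pos ha, if_neg hb]; simp
      · rw [if_neg ha, if_pos hb]; simp
      · rw [if_neg ha, if_neg hb]; simp
    dsimp only
    rw [h2]
    exact le_top
  · intro x
    rw [Fin.sum_univ_three]
    dsimp only
    by_cases hx : x ∈ ({![0,0,0], ![1,0,0]} : Set (Fin 3 → ℤ))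
    · rw [hφB x hx]
      rcases hx with rfl | rfl <;> norm_num <;> exact fun h => (h rfl).elim
    · rw [hφout x hx]
      have hxn : ¬ (x = ![0,0,0] ∨ x = ![1,0,0]) := by
        simpa [Set.mem_insert_iff] using hx
      push_neg at hxn
      obtain ⟨h1, h2⟩ := hxn
      have hx3 : x = ![x 0, x 1, x 2] := by
        funext i; fin_cases i <;> rfl
      have hcon : ¬ ((x 0 = 0 ∨ x 0 = 1) ∧ x 1 = 0 ∧ x 2 = 0) := by
        rintro ⟨ha | ha, hb, hc⟩
        · exact h1 (by rw [hx3, ha, hb, hc])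
        · exact h2 (by rw [hx3, ha, hb, hc])
      by_cases ha : x 0 = 0 ∨ x 0 = 1 <;>
        by_cases hb : x 1 = 0 <;>
        by_cases hc : x 2 = 0
      · exact absurd ⟨ha, hb, hc⟩ hcon
      all_goals simp [ha, hb, hc]

/-- the convolution of the (locally and globally) discrete
midpoint convex function `f` with the separable convex indicator `φ = δ_B`
violates discrete midpoint convexity at `x = (0,0,1)`, `y = (2,1,0)`. -/
theorem convolution_dmc_counterexample
    (f φ g : (Fin 3 → ℤ) → EReal)
    (hfS : ∀ x ∈ ({![0,0,1], ![1,1,0]} : Set (Fin 3 → ℤ)), f x = 0)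
    (hfbox : ∀ x : Fin 3 → ℤ, x ∉ ({![0,0,1], ![1,1,0]} : Set (Fin 3 → ℤ)) →
      (∀ i, 0 ≤ x i ∧ x i ≤ 1) → f x = 1)
    (hfout : ∀ x : Fin 3 → ℤ, ¬ (∀ i, 0 ≤ x i ∧ x i ≤ 1) → f x = ⊤)
    (hφB : ∀ x ∈ ({![0,0,0], ![1,0,0]} : Set (Fin 3 → ℤ)), φ x = 0)
    (hφout : ∀ x : Fin 3 → ℤ, x ∉ ({![0,0,0], ![1,0,0]} : Set (Fin 3 → ℤ)) → φ x = ⊤)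
    (hg : ∀ x, g x = sInf {v : EReal | ∃ y z : Fin 3 → ℤ, x = y + z ∧ v = f y + φ z}) :
    SeparableConvex φ ∧
    (∀ i, |(![0,0,1] : Fin 3 → ℤ) i - (![2,1,0] : Fin 3 → ℤ) i| ≤ 2) ∧
    (∃ i, |(![0,0,1] : Fin 3 → ℤ) i - (![2,1,0] : Fin 3 → ℤ) i| = 2) ∧
    g ![0,0,1] = 0 ∧ g ![2,1,0] = 0 ∧
    midUp (![0,0,1] : Fin 3 → ℤ) ![2,1,0] = ![1,1,1] ∧
    midDown (![0,0,1] : Fin 3 → ℤ) ![2,1,0] = ![1,0,0] ∧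
    g ![1,1,1] = 1 ∧ g ![1,0,0] = 1 ∧
    g ![0,0,1] + g ![2,1,0] <
      g (midUp (![0,0,1] : Fin 3 → ℤ) ![2,1,0]) +
        g (midDown (![0,0,1] : Fin 3 → ℤ) ![2,1,0]) ∧
    ¬ GloballyDMC g ∧ ¬ LocallyDMC g := by

  -- basic membership facts
  classical
  set S : Set (Fin 3 → ℤ) := {![0,0,1], ![1,1,0]} with hSdef
  set B : Set (Fin 3 → ℤ) := {![0,0,0], ![1,0,0]} with hBdef
  have memS : ∀ x : Fin 3 → ℤ, x ∈ S ↔ (x = ![0,0,1] ∨ x = ![1,1,0]) := by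
    intro x; simp [hSdef, Set.mem_insert_iff]
  have memB : ∀ x : Fin 3 → ℤ, x ∈ B ↔ (x = ![0,0,0] ∨ x = ![1,0,0]) := by
    intro x; simp [hBdef, Set.mem_insert_iff]
  -- f is nonnegative and never ⊥
  have hfval : ∀ y : Fin 3 → ℤ, f y = 0 ∨ f y = 1 ∨ f y = ⊤ := by
    intro y
    by_cases hy : y ∈ S
    · exact Or.inl (hfS y hy)
    · by_cases hb : ∀ i, 0 ≤ y i ∧ y i ≤ 1
      · exact Or.inr (Or.inl (hfbox y hy hb))
      · exact Or.inr (Or.inr (hfout y hb))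
  have hφval : ∀ z : Fin 3 → ℤ, φ z = 0 ∨ φ z = ⊤ := by
    intro z
    by_cases hz : z ∈ B
    · exact Or.inl (hφB z hz)
    · exact Or.inr (hφout z hz)
  have hf0 : ∀ y, (0:EReal) ≤ f y := by
    intro y; rcases hfval y with h | h | h <;> rw [h] <;> norm_num
  have hfnb : ∀ y, f y ≠ ⊥ := by
    intro y; rcases hfval y with h | h | h <;> rw [h]
    · exact EReal.zero_ne_bot
    · exact ne_bot_of_le_ne_bot EReal.zero_ne_bot (by norm_num)
    · exact top_ne_bot
  have hφ0 : ∀ z, (0:EReal) ≤ φ z := by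
    intro z; rcases hφval z with h | h <;> rw [h] <;> norm_num
  -- values of g are nonnegative
  have hg0 : ∀ x, (0:EReal) ≤ g x := by
    intro x
    rw [hg x]
    refine le_sInf ?_
    rintro v ⟨y, z, -, rfl⟩
    exact add_nonneg (hf0 y) (hφ0 z)
  -- explicit g values
  have gvalA : ∀ x : Fin 3 → ℤ, x ∈ S → g x = 0 := by
    intro x hx
    refine le_antisymm ?_ (hg0 x)
    rw [hg x]
    refine sInf_le ⟨x, ![0,0,0], ?_, ?_⟩
    · funext i; fin_cases i <;> simp
    · rw [hfS x hx, hφB ![0,0,0] (by simp [hBdef, Set.mem_insert_iff])]; simp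
  have gvalB : ∀ x : Fin 3 → ℤ, x ∈ S → g (x + ![1,0,0]) = 0 := by
    intro x hx
    refine le_antisymm ?_ (hg0 _)
    rw [hg _]
    refine sInf_le ⟨x, ![1,0,0], rfl, ?_⟩
    rw [hfS x hx, hφB ![1,0,0] (by simp [hBdef, Set.mem_insert_iff])]; simp
  have hg001 : g ![0,0,1] = 0 := gvalA ![0,0,1] (by simp [hSdef, Set.mem_insert_iff])
  have hg210 : g ![2,1,0] = 0 := by
    have h := gvalB ![1,1,0] (by simp [hSdef, Set.mem_insert_iff])
    have he : (![1,1,0] : Fin 3 → ℤ) + ![1,0,0] = ![2,1,0] := by decide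
    rwa [he] at h
  -- g = 1 at the two midpoints
  have gone : ∀ x x' : Fin 3 → ℤ, x' = x - ![1,0,0] →
      (x ∉ S ∧ (∀ i, 0 ≤ x i ∧ x i ≤ 1)) →
      (x' ∉ S ∧ (∀ i, 0 ≤ x' i ∧ x' i ≤ 1)) →
      g x = 1 := by
    rintro x x' rfl hx hx'
    rw [hg x]
    refine le_antisymm ?_ ?_
    · refine sInf_le ⟨x, ![0,0,0], ?_, ?_⟩
      · funext i; fin_cases i <;> simp
      · rw [hfbox x hx.1 hx.2, hφB ![0,0,0] (by simp [hBdef, Set.mem_insert_iff])]; simp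
    · refine le_sInf ?_
      rintro v ⟨y, z, hyz, rfl⟩
      by_cases hz : z ∈ B
      · rcases (memB z).1 hz with rfl | rfl
        · have hy : y = x := by
            have := eq_sub_of_add_eq hyz.symm
            rw [this]; funext i; fin_cases i <;> simp
          rw [hy, hfbox x hx.1 hx.2, hφB _ hz]; simp
        · have hy : y = x - ![1,0,0] := eq_sub_of_add_eq hyz.symm
          rw [hy, hfbox _ hx'.1 hx'.2, hφB _ hz]; simp
      · rw [hφout z hz, EReal.add_top_of_ne_bot (hfnb y)]
        exact le_top
  have hg111 : g ![1,1,1] = 1 := by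
    refine gone ![1,1,1] ![0,1,1] (by decide) ⟨?_, by decide⟩ ?_
    · rw [memS]; decide
    · exact ⟨by rw [memS]; decide, by decide⟩
  have hg100 : g ![1,0,0] = 1 := by
    refine gone ![1,0,0] ![0,0,0] (by decide) ⟨?_, by decide⟩ ?_
    · rw [memS]; decide
    · exact ⟨by rw [memS]; decide, by decide⟩
  -- midpoints
  have hmu : midUp (![0,0,1] : Fin 3 → ℤ) ![2,1,0] = ![1,1,1] := by
    funext i; fin_cases i <;> norm_num [midUp, Int.ceil_eq_iff]
  have hmd : midDown (![0,0,1] : Fin 3 → ℤ) ![2,1,0] = ![1,0,0] := by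
    funext i; fin_cases i <;> norm_num [midDown, Int.floor_eq_iff]
  have hsep : SeparableConvex φ := sepaux φ hφB hφout
  -- final inequality and negations
  have hlt : g ![0,0,1] + g ![2,1,0] <
      g (midUp (![0,0,1] : Fin 3 → ℤ) ![2,1,0]) +
        g (midDown (![0,0,1] : Fin 3 → ℤ) ![2,1,0]) := by
    rw [hmu, hmd, hg001, hg210, hg111, hg100]; norm_num
  refine ⟨hsep, by decide, ⟨0, by decide⟩, hg001, hg210, hmu, hmd, hg111, hg100, hlt, ?_, ?_⟩
  · intro h
    exact absurd (h ![0,0,1] ![2,1,0] ⟨0, by decide⟩) (not_le.mpr hlt)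
  · rintro ⟨-, h⟩
    exact absurd (h ![0,0,1] ![2,1,0] (by decide) ⟨0, by decide⟩) (not_le.mpr hlt)
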